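/- Let (e_i)_{i∈I} be a finite family of pairwise orthogonal central idempotents of the group algebra RG (e_i e_j = 0 for i ≠ j, e_i² = e_i, each e_i central) with ∑_{i∈I} e_i = 1 (for instance, the block idempotents of RG). Then there exists a partition Cl(G) = ⋃_{i∈I} Ω_i of the set of conjugacy classes of G into pairwise disjoint subsets such that for each i the family (e_i·Ĉ)_{C ∈ Ω_i} is an R-basis of the R-submodule e_i·Z(RG) = {e_i z : z ∈ Z(RG)} of the center Z(RG). -/

import Mathlib

/-- The class sum `Ĉ = ∑_{x ∈ C} x` of a conjugacy class `c` of a finite group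
`G`, as an element of the group algebra `RG`. -/
noncomputable def classSum (R : Type*) [CommRing R] {G : Type*} [Group G] [Fintype G]
    (c : ConjClasses G) : MonoidAlgebra R G :=
  letI : DecidablePred (· ∈ c.carrier) := Classical.decPred _
  ∑ x ∈ Finset.univ.filter (· ∈ c.carrier), MonoidAlgebra.of R G x

section aux

variable {R : Type*} [CommRing R] {G : Type*} [Group G] [Fintype G]

lemma classSum_apply [DecidableEq (ConjClasses G)] (c : ConjClasses G) (y : G) :
    (classSum R c).coeff y = if ConjClasses.mk y = c then 1 else 0 := by
  classical
  rw [classSum, MonoidAlgebra.coeff_sum, Finsupp.finset_sum_apply]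
  simp only [MonoidAlgebra.of_apply, MonoidAlgebra.coeff_single, Finsupp.single_apply]
  rw [Finset.sum_ite_eq']
  simp [ConjClasses.mem_carrier_iff_mk_eq]

lemma classSum_mem_center (c : ConjClasses G) :
    classSum R c ∈ Subalgebra.center R (MonoidAlgebra R G) := by
  classical
  rw [Subalgebra.mem_center_iff]
  intro a
  induction a using MonoidAlgebra.induction_on with
  | of g =>
      rw [MonoidAlgebra.of_apply]
      ext y
      rw [MonoidAlgebra.coeff_single_mul_apply, MonoidAlgebra.coeff_mul_single_apply]
      rw [mul_one, one_mul, classSum_apply, classSum_apply]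
      congr 1
      rw [eq_iff_iff, ← ConjClasses.mk_eq_mk_iff_isConj.mpr
        (show IsConj (g⁻¹ * y) (y * g⁻¹) from isConj_iff.mpr ⟨g, by group⟩)]
  | add f g hf hg => rw [add_mul, mul_add, hf, hg]
  | smul r f hf => rw [smul_mul_assoc, mul_smul_comm, hf]

lemma classSum_linearIndependent [Nontrivial R] :
    LinearIndependent R (fun c : ConjClasses G => classSum R c) := by
  classical
  rw [linearIndependent_iff']
  intro s g hsum c hc
  have h := congrArg (fun x : MonoidAlgebra R G => x.coeff (Quotient.out c)) hsum
  simp only [MonoidAlgebra.coeff_sum, Finsupp.finset_sum_apply, MonoidAlgebra.coeff_zero,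
    Finsupp.coe_zero, Pi.zero_apply] at h
  have hs : ∀ (r : R) (v : MonoidAlgebra R G) (y : G), (r • v).coeff y = r * v.coeff y := fun _ _ _ => rfl
  simp only [Finsupp.lapply_apply, hs, classSum_apply, mul_ite, mul_one, mul_zero,
    show ConjClasses.mk (Quotient.out c) = c from Quotient.out_eq c] at h
  rwa [Finset.sum_ite_eq _ c g, if_pos hc] at h

lemma mem_span_classSum (x : MonoidAlgebra R G)
    (hx : x ∈ Subalgebra.center R (MonoidAlgebra R G)) :
    x ∈ Submodule.span R (Set.range (fun c : ConjClasses G => classSum R c)) := by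
  classical
  letI : Fintype (ConjClasses G) := Fintype.ofFinite _
  have hconj : ∀ y z : G, IsConj y z → x.coeff y = x.coeff z := by
    intro y z hyz
    obtain ⟨g, hg⟩ := isConj_iff.mp hyz
    have h := Subalgebra.mem_center_iff.mp hx (MonoidAlgebra.of R G g)
    have h2 := congrArg (fun x : MonoidAlgebra R G => x.coeff (g * y)) h
    simp only [MonoidAlgebra.of_apply] at h2
    rw [MonoidAlgebra.coeff_single_mul_apply, MonoidAlgebra.coeff_mul_single_apply, one_mul, mul_one,
      inv_mul_cancel_left] at h2
    rw [h2, ← hg]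
  have hs : ∀ (r : R) (v : MonoidAlgebra R G) (y : G), (r • v).coeff y = r * v.coeff y := fun _ _ _ => rfl
  have hx2 : ∑ c : ConjClasses G, x.coeff (Quotient.out c) • classSum R c = x := by
    ext y
    have h3 : (∑ c : ConjClasses G, x.coeff (Quotient.out c) • classSum R c).coeff y = x.coeff y := by
      rw [MonoidAlgebra.coeff_sum, Finsupp.finset_sum_apply]
      simp only [Finsupp.lapply_apply, hs, classSum_apply, mul_ite, mul_one, mul_zero]
      rw [Finset.sum_ite_eq Finset.univ (ConjClasses.mk y) (fun c => x.coeff (Quotient.out c)),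
        if_pos (Finset.mem_univ _)]
      exact hconj _ y (ConjClasses.mk_eq_mk_iff_isConj.mp (Quotient.out_eq _))
    exact h3
  rw [← hx2]
  exact Submodule.sum_mem _ fun c _ =>
    Submodule.smul_mem _ _ (Submodule.subset_span ⟨c, rfl⟩)

end aux

/-- **Theorem 2.3, first assertion: the block partition of `Cl(G)`.**
Let `R` be a commutative local ring and `G` a finite group.  Let `(e i)_{i ∈ I}`
be a finite family of pairwise orthogonal central idempotents of the group
algebra `RG` with `∑ i, e i = 1` (for instance, the block idempotents of `RG`).
Then there is a partition `Cl(G) = ⋃_{i ∈ I} Ω_i` of the set of conjugacy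
classes of `G` into pairwise disjoint subsets such that for each `i` the family
of products `e i * Ĉ` for `C ∈ Ω_i` is an `R`-basis of the `R`-submodule
`e i • Z(RG)` of the center `Z(RG)`. -/
theorem stmt12 {R : Type*} [CommRing R] [IsLocalRing R]
    {G : Type*} [Group G] [Fintype G]
    {I : Type*} [Fintype I] (e : I → MonoidAlgebra R G)
    (hcentral : ∀ i, e i ∈ Subalgebra.center R (MonoidAlgebra R G))
    (hidem : ∀ i, e i * e i = e i)
    (horth : ∀ i j, i ≠ j → e i * e j = 0)
    (hsum : ∑ i, e i = 1) :
    ∃ Ωs : I → Set (ConjClasses G),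
      (∀ i j, i ≠ j → Disjoint (Ωs i) (Ωs j)) ∧
      (⋃ i, Ωs i) = Set.univ ∧
      ∀ i,
        LinearIndependent R (fun C : Ωs i => e i * classSum R (C : ConjClasses G)) ∧
        Submodule.span R (Set.range fun C : Ωs i => e i * classSum R (C : ConjClasses G))
          = Submodule.map (LinearMap.mulLeft R (e i))
              (Subalgebra.toSubmodule (Subalgebra.center R (MonoidAlgebra R G))) := by
  classical
  letI : Fintype (ConjClasses G) := Fintype.ofFinite _
  set Zs : Submodule R (MonoidAlgebra R G) :=
    Subalgebra.toSubmodule (Subalgebra.center R (MonoidAlgebra R G)) with hZs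
  let b : ConjClasses G → Zs := fun c => ⟨classSum R c, classSum_mem_center c⟩
  have hbli : LinearIndependent R b :=
    LinearIndependent.of_comp Zs.subtype classSum_linearIndependent
  have hbsp : ⊤ ≤ Submodule.span R (Set.range b) := by
    intro z _
    have hz : (z : MonoidAlgebra R G)
        ∈ Submodule.map Zs.subtype (Submodule.span R (Set.range b)) := by
      rw [Submodule.map_span, ← Set.range_comp]
      exact mem_span_classSum _ z.2
    obtain ⟨v, hv, hval⟩ := hz
    rwa [show v = z from Subtype.ext hval] at hv
  let B : Module.Basis (ConjClasses G) R Zs := Module.Basis.mk hbli hbsp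
  have hwmem : ∀ (i : I) (c : ConjClasses G), e i * classSum R c ∈ Zs := fun i c =>
    (Subalgebra.center R (MonoidAlgebra R G)).mul_mem (hcentral i) (classSum_mem_center c)
  let w : I → ConjClasses G → Zs := fun i c => ⟨e i * classSum R c, hwmem i c⟩
  have hw_sum : (fun c => ∑ i, w i c) = b := by
    funext c
    apply Subtype.ext
    rw [show ((∑ i, w i c : Zs) : MonoidAlgebra R G) = ∑ i, (w i c : MonoidAlgebra R G)
      from Submodule.coe_sum _ _ _]
    show (∑ i, e i * classSum R c) = classSum R c
    rw [← Finset.sum_mul, hsum, one_mul]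
  have hdet : ∑ f : ConjClasses G → I, B.det (fun c => w (f c) c) = 1 := by
    have hms := B.det.toMultilinearMap.map_sum (g := fun c (i : I) => w i c)
    rw [show (B.det.toMultilinearMap fun c => ∑ i, w i c) = B.det (fun c => ∑ i, w i c) from rfl,
      hw_sum, show b = ⇑B from (Module.Basis.coe_mk hbli hbsp).symm, Module.Basis.det_self] at hms
    exact hms.symm
  obtain ⟨f, hfu⟩ : ∃ f : ConjClasses G → I, IsUnit (B.det fun c => w (f c) c) := by
    by_contra hcon
    push_neg at hcon
    have h0 : ∀ f : ConjClasses G → I, IsLocalRing.residue R (B.det fun c => w (f c) c) = 0 :=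
      fun f => (IsLocalRing.residue_eq_zero_iff _).mpr
        (IsLocalRing.mem_maximalIdeal _ |>.mpr (mem_nonunits_iff.mpr (hcon f)))
    have h1 := congrArg (IsLocalRing.residue R) hdet
    rw [map_sum, map_one] at h1
    simp only [h0, Finset.sum_const_zero] at h1
    exact zero_ne_one h1
  obtain ⟨hli, hsp⟩ := (Module.Basis.is_basis_iff_det B).mpr hfu
  have hliamb : LinearIndependent R (fun c => e (f c) * classSum R c) :=
    hli.map' Zs.subtype (Submodule.ker_subtype Zs)
  have hspamb : Submodule.span R (Set.range fun c => e (f c) * classSum R c) = Zs := by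
    have h2 := congrArg (Submodule.map Zs.subtype) hsp
    rwa [Submodule.map_span, ← Set.range_comp, Submodule.map_top, Submodule.range_subtype] at h2
  refine ⟨fun i => f ⁻¹' {i}, ?_, ?_, ?_⟩
  · intro i j hij
    rw [Set.disjoint_left]
    rintro c (hci : f c = i) (hcj : f c = j)
    exact hij (hci ▸ hcj)
  · ext c
    simp only [Set.mem_iUnion, Set.mem_preimage, Set.mem_singleton_iff, Set.mem_univ, iff_true]
    exact ⟨f c, rfl⟩
  · intro i
    have hfun : (fun C : (f ⁻¹' {i} : Set (ConjClasses G)) => e i * classSum R (C : ConjClasses G))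
        = (fun C : (f ⁻¹' {i} : Set (ConjClasses G)) =>
            e (f (C : ConjClasses G)) * classSum R (C : ConjClasses G)) := by
      funext C
      rw [show f (C : ConjClasses G) = i from C.2]
    constructor
    · rw [hfun]
      exact hliamb.comp _ Subtype.val_injective
    · apply le_antisymm
      · rw [Submodule.span_le]
        rintro _ ⟨C, rfl⟩
        exact ⟨classSum R (C : ConjClasses G), classSum_mem_center _, rfl⟩
      · rintro _ ⟨z, hz, rfl⟩
        have hz' : z ∈ Submodule.span R (Set.range fun c => e (f c) * classSum R c) :=
          hspamb ▸ hz
        have hmem : LinearMap.mulLeft R (e i) z ∈ Submodule.map (LinearMap.mulLeft R (e i))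
            (Submodule.span R (Set.range fun c => e (f c) * classSum R c)) := ⟨z, hz', rfl⟩
        rw [Submodule.map_span, ← Set.range_comp] at hmem
        refine Submodule.span_le.mpr ?_ hmem
        rintro _ ⟨c, rfl⟩
        show e i * (e (f c) * classSum R c) ∈ _
        by_cases hci : f c = i
        · rw [← mul_assoc, hci, hidem]
          exact Submodule.subset_span ⟨⟨c, hci⟩, rfl⟩
        · rw [← mul_assoc, horth i (f c) (fun h => hci h.symm), zero_mul]
          exact Submodule.zero_mem _
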